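/- arXiv:1706.00064 — 4 statements merged into one kernel-verified Lean document; each statement's English description precedes it below -/
import Mathlib

section
/- The function u_c(ξ) = c·sech²(√c·ξ) with c > 0 satisfies the stationary KdV equation -u'' + 4c·u - 6u² = 0 on ℝ. -/
open Real

private lemma hasDerivAt_F (s : ℝ) (c : ℝ) (ξ : ℝ) :
    HasDerivAt (fun x => c * (1 / Real.cosh (s * x))^2)
      (-2 * c * s * (Real.sinh (s * ξ) / (Real.cosh (s * ξ))^3)) ξ := by
  have h1' : HasDerivAt (fun x => Real.cosh (s * x)) (s * Real.sinh (s * ξ)) ξ := by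
    have := (Real.hasDerivAt_cosh (s * ξ)).comp ξ ((hasDerivAt_id ξ).const_mul s)
    simpa [mul_comm, Function.comp_def] using this
  have h2 : HasDerivAt (fun x => (Real.cosh (s * x))^2)
      (2 * Real.cosh (s * ξ) * (s * Real.sinh (s * ξ))) ξ := by
    simpa using h1'.fun_pow 2
  have hne : (Real.cosh (s * ξ))^2 ≠ 0 := by positivity
  have h3 : HasDerivAt (fun x => ((Real.cosh (s * x))^2)⁻¹)
      (-(2 * Real.cosh (s * ξ) * (s * Real.sinh (s * ξ))) / ((Real.cosh (s * ξ))^2)^2) ξ :=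
    h2.inv hne
  have h4 := h3.const_mul c
  have hfun : (fun x => c * (1 / Real.cosh (s * x))^2)
      = (fun y => c * ((Real.cosh (s * y))^2)⁻¹) := by
    funext x; rw [div_pow, one_pow, one_div]
  rw [hfun]
  refine h4.congr_deriv ?_
  have hcne : Real.cosh (s * ξ) ≠ 0 := (Real.cosh_pos (x := s * ξ)).ne'
  field_simp

private lemma hasDerivAt_G (s : ℝ) (c : ℝ) (ξ : ℝ) :
    HasDerivAt (fun x => -2 * c * s * (Real.sinh (s * x) / (Real.cosh (s * x))^3))
      (-2 * c * s * s * ((Real.cosh (s * ξ))^2 - 3 * (Real.sinh (s * ξ))^2) / (Real.cosh (s * ξ))^4) ξ := by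
  have hs : HasDerivAt (fun x => Real.sinh (s * x)) (s * Real.cosh (s * ξ)) ξ := by
    have := (Real.hasDerivAt_sinh (s * ξ)).comp ξ ((hasDerivAt_id ξ).const_mul s)
    simpa [mul_comm, Function.comp_def] using this
  have hc1 : HasDerivAt (fun x => Real.cosh (s * x)) (s * Real.sinh (s * ξ)) ξ := by
    have := (Real.hasDerivAt_cosh (s * ξ)).comp ξ ((hasDerivAt_id ξ).const_mul s)
    simpa [mul_comm, Function.comp_def] using this
  have hc3 : HasDerivAt (fun x => (Real.cosh (s * x))^3)
      (3 * (Real.cosh (s * ξ))^2 * (s * Real.sinh (s * ξ))) ξ := by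
    simpa using hc1.fun_pow 3
  have hne : (Real.cosh (s * ξ))^3 ≠ 0 := by positivity
  have hq := (hs.div hc3 hne).const_mul (-2 * c * s)
  refine hq.congr_deriv ?_
  have hcne : Real.cosh (s * ξ) ≠ 0 := (Real.cosh_pos (x := s * ξ)).ne'
  field_simp

/-- The line soliton `u_c(ξ) = c·sech²(√c·ξ)` with `c > 0` satisfies the stationary
KdV equation `-u'' + 4c·u - 6u² = 0` on `ℝ`. -/
theorem line_soliton_stationary_KdV (c : ℝ) (hc : 0 < c)
    (u : ℝ → ℝ) (hu : ∀ ξ, u ξ = c * (1 / Real.cosh (Real.sqrt c * ξ))^2) :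
    ∀ ξ : ℝ, -(deriv (deriv u)) ξ + 4 * c * u ξ - 6 * (u ξ)^2 = 0 := by
  set s := Real.sqrt c with hsdef
  have hs2 : s * s = c := Real.mul_self_sqrt hc.le
  have hueq : u = fun x => c * (1 / Real.cosh (s * x))^2 := funext hu
  have hderiv : deriv u = fun x => -2 * c * s * (Real.sinh (s * x) / (Real.cosh (s * x))^3) := by
    funext x
    rw [hueq]
    exact (hasDerivAt_F s c x).deriv
  intro ξ
  have h2 : deriv (deriv u) ξ
      = -2 * c * c * ((Real.cosh (s * ξ))^2 - 3 * (Real.sinh (s * ξ))^2) / (Real.cosh (s * ξ))^4 := by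
    rw [hderiv, (hasDerivAt_G s c ξ).deriv]
    rw [show -2 * c * s * s = -2 * c * c by linear_combination (-2 * c) * hs2]
  rw [h2, hu ξ]
  have hcne : Real.cosh (s * ξ) ≠ 0 := (Real.cosh_pos (x := s * ξ)).ne'
  have hsh : (Real.sinh (s * ξ))^2 = (Real.cosh (s * ξ))^2 - 1 := by
    have := Real.cosh_sq_sub_sinh_sq (s * ξ)
    linarith
  field_simp
  rw [hsh]
  ring
end

section
/- For c > 0, the function φ₃(ξ) = 4·sech(√c·ξ) - 5·sech³(√c·ξ) satisfies L_c φ₃ = 3c·φ₃, where L_c = -d²/dξ² + 4c - 12c·sech²(√c·ξ). -/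
open Real

private lemma cosh_ne (x : ℝ) : Real.cosh x ≠ 0 := (Real.cosh_pos x).ne'

private lemma hasDerivAt_sech (s x : ℝ) :
    HasDerivAt (fun ξ => (Real.cosh (s * ξ))⁻¹)
      (-(s * Real.sinh (s * x)) / Real.cosh (s * x) ^ 2) x := by
  have h1 : HasDerivAt (fun ξ : ℝ => s * ξ) s x := by
    simpa using (hasDerivAt_id x).const_mul s
  have h2 : HasDerivAt (fun ξ => Real.cosh (s * ξ)) (Real.sinh (s * x) * s) x :=
    (Real.hasDerivAt_cosh (s * x)).comp x h1
  have := h2.inv (cosh_ne _)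
  refine this.congr_deriv ?_
  field_simp

private lemma hasDerivAt_sinh' (s x : ℝ) :
    HasDerivAt (fun ξ => Real.sinh (s * ξ)) (s * Real.cosh (s * x)) x := by
  have h1 : HasDerivAt (fun ξ : ℝ => s * ξ) s x := by
    simpa using (hasDerivAt_id x).const_mul s
  simpa [mul_comm, Function.comp_def] using (Real.hasDerivAt_sinh (s * x)).comp x h1

/-- For `c > 0`, `φ₃(ξ) = 4·sech(√c·ξ) - 5·sech³(√c·ξ)` satisfies `L_c φ₃ = 3c·φ₃`. -/
theorem eigenfunction_third (c : ℝ) (hc : 0 < c)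
    (φ : ℝ → ℝ)
    (hφ : ∀ ξ, φ ξ = 4 * (1 / Real.cosh (Real.sqrt c * ξ))
        - 5 * (1 / Real.cosh (Real.sqrt c * ξ))^3) :
    ∀ ξ : ℝ, -(deriv (deriv φ)) ξ + 4 * c * φ ξ
      - 12 * c * (1 / Real.cosh (Real.sqrt c * ξ))^2 * φ ξ = 3 * c * φ ξ := by
  set s := Real.sqrt c with hs
  have hs2 : s ^ 2 = c := Real.sq_sqrt hc.le
  set ψ : ℝ → ℝ := fun ξ => s * (-4 * Real.sinh (s * ξ) / Real.cosh (s * ξ) ^ 2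
      + 15 * Real.sinh (s * ξ) / Real.cosh (s * ξ) ^ 4) with hψ
  have hφ' : ∀ x, HasDerivAt φ (ψ x) x := by
    intro x
    have h := ((hasDerivAt_sech s x).const_mul 4).sub
      (((hasDerivAt_sech s x).pow 3).const_mul 5)
    have hφeq : φ = fun ξ => 4 * (Real.cosh (s * ξ))⁻¹ - 5 * ((Real.cosh (s * ξ))⁻¹) ^ 3 := by
      funext ξ; rw [hφ ξ]; simp [one_div]
    rw [hφeq]
    refine h.congr_deriv ?_
    have := cosh_ne (s * x)
    rw [hψ]
    field_simp
    simp only [show (3:ℕ) - 1 = 2 from rfl, Nat.cast_ofNat, one_div, inv_pow]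
    field_simp
    ring
  have hdφ : deriv φ = ψ := funext fun x => (hφ' x).deriv
  intro ξ
  -- second derivative
  have hψ' : HasDerivAt ψ (s ^ 2 * (4 / Real.cosh (s * ξ)
      - 53 / Real.cosh (s * ξ) ^ 3 + 60 / Real.cosh (s * ξ) ^ 5)) ξ := by
    have hc2 : HasDerivAt (fun x => Real.cosh (s * x)) (Real.sinh (s * ξ) * s) ξ := by
      have h1 : HasDerivAt (fun x : ℝ => s * x) s ξ := by
        simpa using (hasDerivAt_id ξ).const_mul s
      exact (Real.hasDerivAt_cosh (s * ξ)).comp ξ h1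
    have hA : HasDerivAt (fun x => -4 * Real.sinh (s * x) / Real.cosh (s * x) ^ 2
        + 15 * Real.sinh (s * x) / Real.cosh (s * x) ^ 4)
        ((-4 * (s * Real.cosh (s * ξ)) * Real.cosh (s * ξ) ^ 2
          - (-4 * Real.sinh (s * ξ)) * (2 * Real.cosh (s * ξ) ^ 1 * (Real.sinh (s * ξ) * s)))
            / (Real.cosh (s * ξ) ^ 2) ^ 2
        + (15 * (s * Real.cosh (s * ξ)) * Real.cosh (s * ξ) ^ 4
          - (15 * Real.sinh (s * ξ)) * (4 * Real.cosh (s * ξ) ^ 3 * (Real.sinh (s * ξ) * s)))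
            / (Real.cosh (s * ξ) ^ 4) ^ 2) ξ := by
      exact ((((hasDerivAt_sinh' s ξ).const_mul (-4)).div (hc2.pow 2)
          (pow_ne_zero 2 (cosh_ne _)))).add
        (((hasDerivAt_sinh' s ξ).const_mul 15).div (hc2.pow 4)
          (pow_ne_zero 4 (cosh_ne _)))
    have h := hA.const_mul s
    refine h.congr_deriv ?_
    have hne := cosh_ne (s * ξ)
    have hsinh : Real.sinh (s * ξ) ^ 2 = Real.cosh (s * ξ) ^ 2 - 1 := by
      have := Real.cosh_sq_sub_sinh_sq (s * ξ); linarith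
    field_simp
    linear_combination s ^ 2 * (8 * Real.cosh (s * ξ) ^ 2
      - 60) * hsinh
  have hd2 : deriv (deriv φ) ξ = s ^ 2 * (4 / Real.cosh (s * ξ)
      - 53 / Real.cosh (s * ξ) ^ 3 + 60 / Real.cosh (s * ξ) ^ 5) := by
    rw [hdφ]; exact hψ'.deriv
  rw [hd2, hφ ξ, hs2]
  have hne := cosh_ne (s * ξ)
  field_simp
  ring
end

section
/- With c* = 1/5, ψ*(ξ) = sech³(√c*·ξ), and L'_{c*} the operator of multiplication by 4 - 12·sech²(√c*·ξ) + 12·√c*·ξ·sech²(√c*·ξ)·tanh(√c*·ξ), the inner product ⟨ψ*, L'_{c*}ψ*⟩_{L²} = ∫_ℝ ψ*(ξ)·(L'_{c*}ψ*)(ξ)dξ equals -16/(3√c*). -/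
open Real MeasureTheory Filter Topology Set

set_option maxHeartbeats 1000000

lemma my_continuous_tanh : Continuous Real.tanh := by
  have : Real.tanh = fun x => Real.sinh x / Real.cosh x := by
    funext x; exact Real.tanh_eq_sinh_div_cosh x
  rw [this]
  exact Real.continuous_sinh.div Real.continuous_cosh (fun x => (Real.cosh_pos x).ne')

lemma my_sech_sq (x : ℝ) : (1 / Real.cosh x) ^ 2 = 1 - Real.tanh x ^ 2 := by
  have hc := Real.cosh_pos x
  rw [Real.tanh_eq_sinh_div_cosh]
  field_simp
  linarith [Real.cosh_sq_sub_sinh_sq x]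

lemma my_hasDerivAt_tanh (x : ℝ) : HasDerivAt Real.tanh (1 - Real.tanh x ^ 2) x := by
  have hc := Real.cosh_pos x
  have h : HasDerivAt (fun y => Real.sinh y / Real.cosh y)
      ((Real.cosh x * Real.cosh x - Real.sinh x * Real.sinh x) / Real.cosh x ^ 2) x :=
    (Real.hasDerivAt_sinh x).div (Real.hasDerivAt_cosh x) hc.ne'
  have heq : (fun y => Real.sinh y / Real.cosh y) = Real.tanh := by
    funext y; exact (Real.tanh_eq_sinh_div_cosh y).symm
  rw [heq] at h
  convert h using 1
  rw [Real.tanh_eq_sinh_div_cosh]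
  field_simp

lemma my_tanh_eq_exp (x : ℝ) :
    Real.tanh x = (1 - Real.exp (-2 * x)) / (1 + Real.exp (-2 * x)) := by
  have h1 : (0:ℝ) < Real.exp x := Real.exp_pos x
  have h2 : (0:ℝ) < (Real.exp x)⁻¹ := by positivity
  have hne : Real.exp x ≠ 0 := h1.ne'
  have hd1 : Real.exp x + (Real.exp x)⁻¹ ≠ 0 := by positivity
  have hd2 : 1 + (Real.exp x)⁻¹ * (Real.exp x)⁻¹ ≠ 0 := by positivity
  rw [Real.tanh_eq_sinh_div_cosh, Real.sinh_eq, Real.cosh_eq,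
    show (-2 * x) = (-x) + (-x) by ring, Real.exp_add, Real.exp_neg]
  field_simp

lemma my_tendsto_tanh_atTop : Tendsto Real.tanh atTop (𝓝 1) := by
  have hexp : Tendsto (fun x : ℝ => Real.exp (-2 * x)) atTop (𝓝 0) := by
    apply Real.tendsto_exp_atBot.comp
    have h : Tendsto (fun x : ℝ => -(2 * x)) atTop atBot :=
      tendsto_neg_atTop_atBot.comp (Tendsto.const_mul_atTop two_pos tendsto_id)
    show Tendsto (fun x : ℝ => (-2) * x) atTop atBot
    simp only [neg_mul]
    exact h
  have h : Tendsto (fun x : ℝ => (1 - Real.exp (-2 * x)) / (1 + Real.exp (-2 * x)))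
      atTop (𝓝 ((1 - 0) / (1 + 0))) :=
    Tendsto.div (tendsto_const_nhds.sub hexp) (tendsto_const_nhds.add hexp) (by norm_num)
  have heq : Real.tanh = fun x => (1 - Real.exp (-2 * x)) / (1 + Real.exp (-2 * x)) := by
    funext x; exact my_tanh_eq_exp x
  rw [heq]
  simpa using h

noncomputable def Faux (a : ℝ) : ℝ → ℝ := fun x =>
  1 / a * (4 * (Real.tanh (a * x) - 2 / 3 * Real.tanh (a * x) ^ 3
      + 1 / 5 * Real.tanh (a * x) ^ 5)
    - 21 / 2 * (Real.tanh (a * x) - Real.tanh (a * x) ^ 3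
      + 3 / 5 * Real.tanh (a * x) ^ 5 - 1 / 7 * Real.tanh (a * x) ^ 7))
  - 3 / 2 * (x * (1 - Real.tanh (a * x) ^ 2) ^ 4)

noncomputable def faux (a : ℝ) : ℝ → ℝ := fun ξ =>
  4 * (1 - Real.tanh (a * ξ) ^ 2) ^ 3 - 12 * (1 - Real.tanh (a * ξ) ^ 2) ^ 4
    + 12 * (a * ξ) * (1 - Real.tanh (a * ξ) ^ 2) ^ 4 * Real.tanh (a * ξ)

lemma Faux_hasDerivAt {a : ℝ} (ha : a ≠ 0) (ξ : ℝ) :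
    HasDerivAt (Faux a) (faux a ξ) ξ := by
  have hmul : HasDerivAt (fun x : ℝ => a * x) a ξ := by
    simpa using (hasDerivAt_id ξ).const_mul a
  have ht : HasDerivAt (fun x : ℝ => Real.tanh (a * x))
      ((1 - Real.tanh (a * ξ) ^ 2) * a) ξ :=
    (my_hasDerivAt_tanh (a * ξ)).comp ξ hmul
  have h1 := ((ht.sub ((ht.pow 3).const_mul (2/3 : ℝ))).add
      ((ht.pow 5).const_mul (1/5 : ℝ))).const_mul (4 : ℝ)
  have h2 := (((ht.sub (ht.pow 3)).add ((ht.pow 5).const_mul (3/5 : ℝ))).sub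
      ((ht.pow 7).const_mul (1/7 : ℝ))).const_mul (21/2 : ℝ)
  have h3 := (h1.sub h2).const_mul (1/a)
  have h4 := ((hasDerivAt_id ξ).mul
      (((hasDerivAt_const ξ (1:ℝ)).sub (ht.pow 2)).pow 4)).const_mul (3/2 : ℝ)
  have h5 := h3.sub h4
  have h6 : HasDerivAt (Faux a) _ ξ := h5
  convert h6 using 1
  unfold faux
  push_cast
  simp only [Pi.sub_apply, Pi.pow_apply, id]
  field_simp
  ring

lemma Faux_odd (a : ℝ) (x : ℝ) : Faux a (-x) = -Faux a x := by
  unfold Faux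
  rw [mul_neg, Real.tanh_neg]
  ring

lemma my_integrable_exp_neg_abs {b : ℝ} (hb : 0 < b) :
    Integrable (fun x : ℝ => Real.exp (-b * |x|)) := by
  have hIoi : IntegrableOn (fun x : ℝ => Real.exp (-b * |x|)) (Ioi 0) := by
    refine (exp_neg_integrableOn_Ioi 0 hb).congr_fun (fun x hx => ?_) measurableSet_Ioi
    rw [abs_of_pos hx]
  have hIic : IntegrableOn (fun x : ℝ => Real.exp (-b * |x|)) (Iic 0) := by
    rw [← Measure.map_neg_eq_self (volume : Measure ℝ)]
    have m : MeasurableEmbedding fun x : ℝ => -x :=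
      (Homeomorph.neg ℝ).measurableEmbedding
    rw [m.integrableOn_map_iff]
    simp_rw [Function.comp_def, abs_neg, neg_preimage, neg_Iic, neg_zero]
    exact (integrableOn_Ici_iff_integrableOn_Ioi (by simp)).mpr hIoi
  have h := hIic.union hIoi
  rwa [Iic_union_Ioi, integrableOn_univ] at h

lemma my_one_div_cosh_le {y : ℝ} (hy : 0 ≤ y) :
    1 / Real.cosh y ≤ 2 * Real.exp (-y) := by
  have hc : Real.exp y / 2 ≤ Real.cosh y := by
    rw [Real.cosh_eq]
    have := (Real.exp_pos (-y)).le
    linarith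
  calc 1 / Real.cosh y ≤ 1 / (Real.exp y / 2) :=
        one_div_le_one_div_of_le (by positivity) hc
    _ = 2 * Real.exp (-y) := by
        rw [Real.exp_neg]
        field_simp

lemma my_tendsto_mul_sech_pow {a : ℝ} (ha : 0 < a) :
    Tendsto (fun x : ℝ => x * (1 - Real.tanh (a * x) ^ 2) ^ 4) atTop (𝓝 0) := by
  have heq : (fun x : ℝ => x * (1 - Real.tanh (a * x) ^ 2) ^ 4)
      = fun x : ℝ => x * ((1 / Real.cosh (a * x)) ^ 2) ^ 4 := by
    funext x; rw [my_sech_sq]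
  rw [heq]
  have h0 : Tendsto (fun y : ℝ => y * Real.exp (-y)) atTop (𝓝 0) := by
    simpa using Real.tendsto_pow_mul_exp_neg_atTop_nhds_zero 1
  have hax : Tendsto (fun x : ℝ => 8 * a * x) atTop atTop :=
    Tendsto.const_mul_atTop (by positivity) tendsto_id
  have hcomp : Tendsto (fun x : ℝ => (8 * a * x) * Real.exp (-(8 * a * x))) atTop (𝓝 0) :=
    h0.comp hax
  have hg : Tendsto (fun x : ℝ => 256 / (8 * a) * ((8 * a * x) * Real.exp (-(8 * a * x))))
      atTop (𝓝 0) := by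
    have := hcomp.const_mul (256 / (8 * a))
    simpa using this
  apply squeeze_zero' ?_ ?_ hg
  · filter_upwards [eventually_ge_atTop (0:ℝ)] with x hx
    positivity
  · filter_upwards [eventually_ge_atTop (0:ℝ)] with x hx
    have hax0 : 0 ≤ a * x := by positivity
    have hs : 1 / Real.cosh (a * x) ≤ 2 * Real.exp (-(a * x)) := my_one_div_cosh_le hax0
    have hs0 : 0 ≤ 1 / Real.cosh (a * x) := by positivity
    have hpow : ((1 / Real.cosh (a * x)) ^ 2) ^ 4 ≤ (2 * Real.exp (-(a * x))) ^ 8 := by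
      calc ((1 / Real.cosh (a * x)) ^ 2) ^ 4 = (1 / Real.cosh (a * x)) ^ 8 := by ring
        _ ≤ (2 * Real.exp (-(a * x))) ^ 8 := by
            exact pow_le_pow_left₀ hs0 hs 8
    have hexp8 : Real.exp (-(a * x)) ^ 8 = Real.exp (-(8 * a * x)) := by
      rw [← Real.exp_nat_mul]
      norm_num
      ring_nf
    calc x * ((1 / Real.cosh (a * x)) ^ 2) ^ 4 ≤ x * (2 * Real.exp (-(a * x))) ^ 8 :=
          mul_le_mul_of_nonneg_left hpow hx
      _ = 256 / (8 * a) * ((8 * a * x) * Real.exp (-(8 * a * x))) := by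
          rw [mul_pow, ← hexp8]
          field_simp
          ring

lemma Faux_tendsto_atTop {a : ℝ} (ha : 0 < a) :
    Tendsto (Faux a) atTop (𝓝 (-8 / (3 * a))) := by
  have hax : Tendsto (fun x : ℝ => a * x) atTop atTop :=
    Tendsto.const_mul_atTop ha tendsto_id
  have hT : Tendsto (fun x : ℝ => Real.tanh (a * x)) atTop (𝓝 1) :=
    my_tendsto_tanh_atTop.comp hax
  have h1 := ((hT.sub ((hT.pow 3).const_mul (2/3 : ℝ))).add
      ((hT.pow 5).const_mul (1/5 : ℝ))).const_mul (4 : ℝ)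
  have h2 := (((hT.sub (hT.pow 3)).add ((hT.pow 5).const_mul (3/5 : ℝ))).sub
      ((hT.pow 7).const_mul (1/7 : ℝ))).const_mul (21/2 : ℝ)
  have h3 := (h1.sub h2).const_mul (1/a)
  have h4 := (my_tendsto_mul_sech_pow ha).const_mul (3/2 : ℝ)
  have h5 := h3.sub h4
  unfold Faux
  convert h5 using 2
  norm_num
  field_simp

lemma Faux_tendsto_atBot {a : ℝ} (ha : 0 < a) :
    Tendsto (Faux a) atBot (𝓝 (8 / (3 * a))) := by
  have h := (Faux_tendsto_atTop ha).comp tendsto_neg_atBot_atTop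
  have h' : Tendsto (fun x : ℝ => -Faux a x) atBot (𝓝 (-8 / (3 * a))) := by
    simpa [Function.comp_def, Faux_odd] using h
  have h2 := h'.neg
  simpa [neg_div] using h2

lemma integrable_faux {a : ℝ} (ha : 0 < a) : Integrable (faux a) := by
  have hT : Continuous fun ξ : ℝ => Real.tanh (a * ξ) :=
    my_continuous_tanh.comp (continuous_const.mul continuous_id)
  have c1 : Continuous fun ξ : ℝ => 1 - Real.tanh (a * ξ) ^ 2 :=
    continuous_const.sub (hT.pow 2)
  have hcont : Continuous (faux a) := by
    unfold faux
    exact ((continuous_const.mul (c1.pow 3)).sub (continuous_const.mul (c1.pow 4))).add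
      (((continuous_const.mul (continuous_const.mul continuous_id)).mul (c1.pow 4)).mul hT)
  refine Integrable.mono' ((my_integrable_exp_neg_abs ha).const_mul 112)
    hcont.aestronglyMeasurable (ae_of_all _ fun ξ => ?_)
  set t := Real.tanh (a * ξ) with ht_def
  set u := a * |ξ| with hu_def
  have hu : 0 ≤ u := by positivity
  have hsech : (1 / Real.cosh (a * ξ)) ^ 2 = 1 - t ^ 2 := my_sech_sq (a * ξ)
  have hs2a : 0 ≤ 1 - t ^ 2 := by rw [← hsech]; positivity
  have ht1 : |t| ≤ 1 := by
    rw [← sq_le_one_iff_abs_le_one]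
    nlinarith
  have hcosh_abs : Real.cosh (a * ξ) = Real.cosh u := by
    rw [hu_def, ← Real.cosh_abs, abs_mul, abs_of_pos ha]
  have hsle : 1 / Real.cosh (a * ξ) ≤ 2 * Real.exp (-u) := by
    rw [hcosh_abs]; exact my_one_div_cosh_le hu
  have hs0 : 0 ≤ 1 / Real.cosh (a * ξ) := by positivity
  have hs2le : 1 - t ^ 2 ≤ (2 * Real.exp (-u)) ^ 2 := by
    rw [← hsech]
    exact pow_le_pow_left₀ hs0 hsle 2
  have hxabs : a * ξ ≤ u ∧ -u ≤ a * ξ := by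
    constructor
    · rw [hu_def]; exact mul_le_mul_of_nonneg_left (le_abs_self ξ) ha.le
    · rw [hu_def]
      have := neg_abs_le ξ
      nlinarith
  have hprod : Real.exp u * Real.exp (-u) = 1 := by
    rw [← Real.exp_add]; simp
  have hue : u * Real.exp (-u) ≤ 1 := by
    nlinarith [Real.add_one_le_exp u, Real.exp_pos (-u), Real.exp_pos u]
  have he1 : Real.exp (-u) ≤ 1 := by
    rw [← Real.exp_zero]
    exact Real.exp_le_exp.mpr (by linarith)
  have hb1 : |faux a ξ| ≤ (16 + 12 * u) * (1 - t ^ 2) := by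
    rw [abs_le]
    unfold faux
    rw [← ht_def]
    set s : ℝ := 1 - t ^ 2 with hs_def
    have hs1 : s ≤ 1 := by rw [hs_def]; nlinarith [sq_nonneg t]
    have h3 : s^3 ≤ s := by
      have := pow_le_pow_of_le_one hs2a hs1 (by norm_num : 1 ≤ 3)
      simpa using this
    have h4 : s^4 ≤ s := by
      have := pow_le_pow_of_le_one hs2a hs1 (by norm_num : 1 ≤ 4)
      simpa using this
    have h30 : 0 ≤ s^3 := by positivity
    have h40 : 0 ≤ s^4 := by positivity
    have habs : |12 * (a * ξ) * s^4 * t| ≤ 12 * u * s := by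
      rw [abs_mul, abs_mul, abs_mul]
      have h12 : |(12:ℝ)| = 12 := by norm_num
      rw [h12, abs_of_nonneg h40]
      have h5 : |a * ξ| = u := by rw [hu_def, abs_mul, abs_of_pos ha]
      rw [h5]
      calc 12 * u * s^4 * |t| ≤ 12 * u * s^4 * 1 := by
            apply mul_le_mul_of_nonneg_left ht1; positivity
        _ ≤ 12 * u * s := by
            have h6 := mul_le_mul_of_nonneg_left h4 (by positivity : (0:ℝ) ≤ 12 * u)
            linarith
    rw [abs_le] at habs
    clear_value t u s
    constructor <;> linarith [habs.1, habs.2]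
  have hgoal : (16 + 12 * u) * (1 - t ^ 2) ≤ 112 * Real.exp (-a * |ξ|) := by
    have hux : -a * |ξ| = -u := by rw [hu_def]; ring
    rw [hux]
    have hmid : (16 + 12 * u) * (1 - t ^ 2) ≤ (16 + 12 * u) * (2 * Real.exp (-u)) ^ 2 := by
      apply mul_le_mul_of_nonneg_left hs2le
      linarith
    refine hmid.trans ?_
    have hexp : (0:ℝ) < Real.exp (-u) := Real.exp_pos _
    have k1 := mul_le_mul_of_nonneg_right hue hexp.le
    have k2 := mul_le_mul_of_nonneg_right he1 hexp.le
    have expand : (16 + 12 * u) * (2 * Real.exp (-u)) ^ 2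
        = 64 * (Real.exp (-u) * Real.exp (-u)) + 48 * (u * Real.exp (-u) * Real.exp (-u)) := by
      ring
    rw [expand]
    clear_value t u
    linarith [k1, k2]
  calc ‖faux a ξ‖ = |faux a ξ| := rfl
    _ ≤ (16 + 12 * u) * (1 - t ^ 2) := hb1
    _ ≤ 112 * Real.exp (-a * |ξ|) := hgoal

/-- With `c* = 1/5` and `ψ*(ξ) = sech³(√c*·ξ)`,
`⟨ψ*, L'_{c*}ψ*⟩ = -16/(3√c*)`, where `L'_{c*}` is multiplication by
`4 - 12·sech²(√c*·ξ) + 12√c*·ξ·sech²(√c*·ξ)·tanh(√c*·ξ)`. -/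
theorem inner_product_psi_Lprime_psi :
    let c : ℝ := 1/5
    let ψ : ℝ → ℝ := fun ξ => (1 / Real.cosh (Real.sqrt c * ξ))^3
    (∫ ξ : ℝ, ψ ξ * ((4 - 12 * (1 / Real.cosh (Real.sqrt c * ξ))^2
        + 12 * Real.sqrt c * ξ * (1 / Real.cosh (Real.sqrt c * ξ))^2
          * Real.tanh (Real.sqrt c * ξ)) * ψ ξ))
      = -16 / (3 * Real.sqrt c) := by
  intro c ψ
  have ha : 0 < Real.sqrt c := Real.sqrt_pos.mpr (by norm_num)
  set a := Real.sqrt c with ha_def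
  have hpt : ∀ ξ : ℝ, ψ ξ * ((4 - 12 * (1 / Real.cosh (a * ξ))^2
      + 12 * a * ξ * (1 / Real.cosh (a * ξ))^2 * Real.tanh (a * ξ)) * ψ ξ) = faux a ξ := by
    intro ξ
    have h := my_sech_sq (a * ξ)
    show (1 / Real.cosh (a * ξ))^3 * (_ * (1 / Real.cosh (a * ξ))^3) = _
    unfold faux
    set S := 1 / Real.cosh (a * ξ) with hS_def
    rw [show S^3 * ((4 - 12 * S^2 + 12 * a * ξ * S^2 * Real.tanh (a * ξ)) * S^3)
        = 4 * (S^2)^3 - 12 * (S^2)^4 + 12 * (a * ξ) * (S^2)^4 * Real.tanh (a * ξ) from by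
          ring, h]
  rw [MeasureTheory.integral_congr_ae (MeasureTheory.ae_of_all _ hpt)]
  rw [MeasureTheory.integral_of_hasDerivAt_of_tendsto
    (fun x => Faux_hasDerivAt ha.ne' x) (integrable_faux ha)
    (Faux_tendsto_atBot ha) (Faux_tendsto_atTop ha)]
  ring
end

section
/- With c* = 1/5 and ψ*(ξ) = sech³(√c*·ξ), the function w₀(ξ) = -15·sech²(√c*·ξ) + (15/2)·sech⁴(√c*·ξ) satisfies the linear inhomogeneous equation L_{c*} w₀ = 12·ψ*², where L_{c*} = -d²/dξ² + 4c* - 12c*·sech²(√c*·ξ). -/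
open Real

lemma sqhelper : (Real.sqrt (1/5)) ^ 2 = 1/5 := Real.sq_sqrt (by norm_num)

lemma hasDerivAt_invcosh_pow (a : ℝ) (n : ℕ) (ξ : ℝ) :
    HasDerivAt (fun x => (Real.cosh (a*x))⁻¹ ^ n)
      (-(n : ℝ) * a * Real.sinh (a*ξ) * (Real.cosh (a*ξ))⁻¹ ^ (n+1)) ξ := by
  have h1 : HasDerivAt (fun x => Real.cosh (a*x)) (a * Real.sinh (a*ξ)) ξ := by
    exact (((hasDerivAt_id' ξ).const_mul a).cosh).congr_deriv (by ring)
  have h2 : HasDerivAt (fun x => (Real.cosh (a*x))⁻¹)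
      (-(a * Real.sinh (a*ξ)) / (Real.cosh (a*ξ))^2) ξ := h1.inv (Real.cosh_pos _).ne'
  have h3 : HasDerivAt (fun x => (Real.cosh (a*x))⁻¹ ^ n)
      (↑n * (Real.cosh (a*ξ))⁻¹ ^ (n - 1) * (-(a * Real.sinh (a*ξ)) / Real.cosh (a*ξ) ^ 2)) ξ := h2.pow n
  convert h3 using 1
  have hc := (Real.cosh_pos (a*ξ)).ne'
  cases n with
  | zero => simp
  | succ m =>
    rw [Nat.add_sub_cancel]
    simp only [inv_pow]
    field_simp
    ring

lemma hasDerivAt_sinh_invcosh_pow (a : ℝ) (n : ℕ) (ξ : ℝ) :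
    HasDerivAt (fun x => Real.sinh (a*x) * (Real.cosh (a*x))⁻¹ ^ n)
      (a * Real.cosh (a*ξ) * (Real.cosh (a*ξ))⁻¹ ^ n
        + Real.sinh (a*ξ) * (-(n : ℝ) * a * Real.sinh (a*ξ) * (Real.cosh (a*ξ))⁻¹ ^ (n+1))) ξ := by
  have h1 : HasDerivAt (fun x => Real.sinh (a*x)) (a * Real.cosh (a*ξ)) ξ := by
    exact (((hasDerivAt_id' ξ).const_mul a).sinh).congr_deriv (by ring)
  exact h1.mul (hasDerivAt_invcosh_pow a n ξ)

/-- With `c* = 1/5`, `w₀(ξ) = -15·sech²(√c*·ξ) + (15/2)·sech⁴(√c*·ξ)` satisfies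
`L_{c*} w₀ = 12 ψ*²` where `ψ*(ξ) = sech³(√c*·ξ)`. -/
theorem w0_equation
    (w₀ : ℝ → ℝ)
    (hw : ∀ ξ, w₀ ξ = -15 * (1 / Real.cosh (Real.sqrt (1/5) * ξ))^2
        + (15/2) * (1 / Real.cosh (Real.sqrt (1/5) * ξ))^4) :
    ∀ ξ : ℝ, -(deriv (deriv w₀)) ξ + 4 * (1/5) * w₀ ξ
        - 12 * (1/5) * (1 / Real.cosh (Real.sqrt (1/5) * ξ))^2 * w₀ ξ
      = 12 * ((1 / Real.cosh (Real.sqrt (1/5) * ξ))^3)^2 := by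
  intro ξ
  set a := Real.sqrt (1/5) with ha
  have hwfun : w₀ = fun x => -15 * (Real.cosh (a*x))⁻¹^2 + (15/2) * (Real.cosh (a*x))⁻¹^4 := by
    funext x
    simp [hw x, one_div]
  -- first derivative
  have hderiv1 : deriv w₀ = fun x =>
      30 * a * Real.sinh (a*x) * (Real.cosh (a*x))⁻¹^3
      - 30 * a * Real.sinh (a*x) * (Real.cosh (a*x))⁻¹^5 := by
    funext x
    rw [hwfun]
    have h := (((hasDerivAt_invcosh_pow a 2 x).const_mul (-15 : ℝ)).add
      ((hasDerivAt_invcosh_pow a 4 x).const_mul (15/2 : ℝ)))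
    have h2 : HasDerivAt (fun y => -15 * (Real.cosh (a*y))⁻¹^2 + (15/2) * (Real.cosh (a*y))⁻¹^4) _ x := h
    rw [h2.deriv]
    push_cast
    ring
  -- second derivative
  have hderiv2 : deriv (deriv w₀) ξ =
      30 * a^2 * (Real.cosh (a*ξ) * (Real.cosh (a*ξ))⁻¹^3
        - 3 * Real.sinh (a*ξ)^2 * (Real.cosh (a*ξ))⁻¹^4)
      - 30 * a^2 * (Real.cosh (a*ξ) * (Real.cosh (a*ξ))⁻¹^5
        - 5 * Real.sinh (a*ξ)^2 * (Real.cosh (a*ξ))⁻¹^6) := by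
    rw [hderiv1]
    have h := (((hasDerivAt_sinh_invcosh_pow a 3 ξ).const_mul (30*a : ℝ)).sub
      ((hasDerivAt_sinh_invcosh_pow a 5 ξ).const_mul (30*a : ℝ)))
    have h' : (fun x => 30 * a * Real.sinh (a*x) * (Real.cosh (a*x))⁻¹^3
        - 30 * a * Real.sinh (a*x) * (Real.cosh (a*x))⁻¹^5)
      = fun x => 30*a * (Real.sinh (a*x) * (Real.cosh (a*x))⁻¹^3)
        - 30*a * (Real.sinh (a*x) * (Real.cosh (a*x))⁻¹^5) := by
      funext x; ring
    rw [h']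
    have h2 : HasDerivAt (fun y => 30*a * (Real.sinh (a*y) * (Real.cosh (a*y))⁻¹^3)
        - 30*a * (Real.sinh (a*y) * (Real.cosh (a*y))⁻¹^5)) _ ξ := h
    rw [h2.deriv]
    push_cast
    ring
  rw [hderiv2, hw ξ]
  have hc := (Real.cosh_pos (a*ξ)).ne'
  have hsq : Real.sinh (a*ξ)^2 = Real.cosh (a*ξ)^2 - 1 := by
    have := Real.cosh_sq (a*ξ); linarith
  have ha2 : a^2 = 1/5 := sqhelper
  rw [hsq, ha2]
  field_simp
  ring
end
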